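/- Let N ≥ 1, 1 ≤ n ≤ N, and let z, w ∈ ℂ with z ≠ 0 and z^N ≠ w^N. Then (1/N) · ∑_{α ∈ A_N} α^n / (α w − z)^2 = z^{n−2} w^{N−n} · ( N z^N / (z^N − w^N)^2 − (n−1)/(z^N − w^N) ). -/

import Mathlib

open Finset

/-- `(1/N) ∑_{α^N = 1} α^n / (α w - z)^2
      = z^{n-2} w^{N-n} (N z^N/(z^N-w^N)^2 - (n-1)/(z^N-w^N))`. -/
theorem rootsOfUnity_kernel_sum
    (N n : ℕ) (hN : 1 ≤ N) (hn1 : 1 ≤ n) (hnN : n ≤ N)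
    (z w : ℂ) (hz : z ≠ 0) (hzw : z ^ N ≠ w ^ N) :
    (1 / (N : ℂ)) *
        ∑ α ∈ (Polynomial.nthRoots N (1 : ℂ)).toFinset, α ^ n / (α * w - z) ^ 2
      = z ^ ((n : ℤ) - 2) * w ^ (N - n) *
          ((N : ℂ) * z ^ N / (z ^ N - w ^ N) ^ 2
            - ((n : ℂ) - 1) / (z ^ N - w ^ N)) := by
  have hNpos : 0 < N := hN
  have hN0 : (N : ℂ) ≠ 0 := Nat.cast_ne_zero.mpr (by omega)
  have hD : z ^ N - w ^ N ≠ 0 := sub_ne_zero.mpr hzw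
  have hD' : w ^ N - z ^ N ≠ 0 := sub_ne_zero.mpr (Ne.symm hzw)
  set R := (Polynomial.nthRoots N (1 : ℂ)).toFinset with hR
  have hmem : ∀ α ∈ R, α ^ N = 1 := fun α hα =>
    (Polynomial.mem_nthRoots hNpos).mp (Multiset.mem_toFinset.mp hα)
  -- sum of powers over the roots of unity
  have hpow : ∀ m : ℕ, ∑ α ∈ R, α ^ m = if N ∣ m then (N : ℂ) else 0 := by
    intro m
    obtain ⟨ζ, hζ⟩ : ∃ ζ : ℂ, IsPrimitiveRoot ζ N :=
      ⟨_, Complex.isPrimitiveRoot_exp N (by omega)⟩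
    have himg : R = Finset.image (fun k => ζ ^ k) (Finset.range N) := by
      rw [hR]; ext x
      simp [hζ.nthRoots_eq (one_pow N), Multiset.mem_toFinset, eq_comm]
    rw [himg, Finset.sum_image
      (fun i hi j hj h => hζ.pow_inj (mem_range.mp hi) (mem_range.mp hj) h)]
    have hc : ∀ k, (ζ ^ k) ^ m = (ζ ^ m) ^ k := fun k => by
      rw [← pow_mul, ← pow_mul, mul_comm]
    simp_rw [hc]
    by_cases hdvd : N ∣ m
    · have : ζ ^ m = 1 := (hζ.pow_eq_one_iff_dvd m).mpr hdvd
      simp [this, hdvd]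
    · have hne : ζ ^ m ≠ 1 := fun h => hdvd ((hζ.pow_eq_one_iff_dvd m).mp h)
      rw [if_neg hdvd, geom_sum_eq hne]
      have : (ζ ^ m) ^ N = 1 := by
        rw [← pow_mul, mul_comm, pow_mul, hζ.pow_eq_one, one_pow]
      simp [this]
  -- rewrite each term of the sum using the geometric expansion
  have hterm : ∀ α ∈ R, α ^ n / (α * w - z) ^ 2
      = (∑ i ∈ range N, ∑ j ∈ range N,
          α ^ (n + i + j) * (w ^ i * w ^ j * z ^ (N - 1 - i) * z ^ (N - 1 - j)))
        / (w ^ N - z ^ N) ^ 2 := by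
    intro α hα
    have hfac : (∑ i ∈ range N, (α * w) ^ i * z ^ (N - 1 - i)) * (α * w - z)
        = w ^ N - z ^ N := by
      rw [geom_sum₂_mul, mul_pow, hmem α hα, one_mul]
    have hne : α * w - z ≠ 0 := fun h0 => hD' (by rw [← hfac, h0, mul_zero])
    have hSne : (∑ i ∈ range N, (α * w) ^ i * z ^ (N - 1 - i)) ≠ 0 :=
      fun h0 => hD' (by rw [← hfac, h0, zero_mul])
    have expand : α ^ n * (∑ i ∈ range N, (α * w) ^ i * z ^ (N - 1 - i)) ^ 2
        = ∑ i ∈ range N, ∑ j ∈ range N,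
            α ^ (n + i + j) * (w ^ i * w ^ j * z ^ (N - 1 - i) * z ^ (N - 1 - j)) := by
      rw [sq, Finset.sum_mul_sum, Finset.mul_sum]
      refine Finset.sum_congr rfl fun i _ => ?_
      rw [Finset.mul_sum]
      refine Finset.sum_congr rfl fun j _ => ?_
      rw [mul_pow, mul_pow, pow_add, pow_add]
      ring
    rw [← expand, ← hfac]
    field_simp
  rw [Finset.sum_congr rfl hterm, ← Finset.sum_div]
  -- swap the sums and evaluate the sum over the roots
  have hswap : ∑ α ∈ R, ∑ i ∈ range N, ∑ j ∈ range N,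
        α ^ (n + i + j) * (w ^ i * w ^ j * z ^ (N - 1 - i) * z ^ (N - 1 - j))
      = ∑ i ∈ range N, ∑ j ∈ range N, (if N ∣ (n + i + j) then (N : ℂ) else 0)
          * (w ^ i * w ^ j * z ^ (N - 1 - i) * z ^ (N - 1 - j)) := by
    rw [Finset.sum_comm]
    refine Finset.sum_congr rfl fun i _ => ?_
    rw [Finset.sum_comm]
    refine Finset.sum_congr rfl fun j _ => ?_
    rw [← Finset.sum_mul, hpow]
  rw [hswap]
  -- evaluate the inner sum: for each i exactly one j contributes
  have hinner : ∀ i ∈ range N,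
      ∑ j ∈ range N, (if N ∣ (n + i + j) then (N : ℂ) else 0)
          * (w ^ i * w ^ j * z ^ (N - 1 - i) * z ^ (N - 1 - j))
        = if i ≤ N - n then (N : ℂ) * (w ^ (N - n) * z ^ (N + n - 2))
          else (N : ℂ) * (w ^ (2 * N - n) * z ^ (n - 2)) := by
    intro i hi'
    have hi : i < N := mem_range.mp hi'
    by_cases h : i ≤ N - n
    · set j0 : ℕ := N - n - i with hj0def
      have hj0lt : j0 < N := by omega
      have hdvd : N ∣ n + i + j0 := ⟨1, by omega⟩
      rw [Finset.sum_eq_single j0, if_pos hdvd, if_pos h,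
        ← pow_add, mul_assoc, ← pow_add,
        show i + (N - n - i) = N - n by omega,
        show N - 1 - i + (N - 1 - (N - n - i)) = N + n - 2 by omega]
      · intro j hj hne
        rw [if_neg, zero_mul]
        intro hd
        have e3 : j ≡ j0 [MOD N] := Nat.ModEq.add_left_cancel' (n + i)
          (((Nat.modEq_zero_iff_dvd).mpr hd).trans
            ((Nat.modEq_zero_iff_dvd).mpr hdvd).symm)
        exact hne (by
          have := e3
          unfold Nat.ModEq at this
          rwa [Nat.mod_eq_of_lt (mem_range.mp hj), Nat.mod_eq_of_lt hj0lt] at this)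
      · exact fun h => absurd (mem_range.mpr hj0lt) h
    · set j0 : ℕ := 2 * N - n - i with hj0def
      have hj0lt : j0 < N := by omega
      have hdvd : N ∣ n + i + j0 := ⟨2, by omega⟩
      rw [Finset.sum_eq_single j0, if_pos hdvd, if_neg h,
        ← pow_add, mul_assoc, ← pow_add,
        show i + (2 * N - n - i) = 2 * N - n by omega,
        show N - 1 - i + (N - 1 - (2 * N - n - i)) = n - 2 by omega]
      · intro j hj hne
        rw [if_neg, zero_mul]
        intro hd
        have e3 : j ≡ j0 [MOD N] := Nat.ModEq.add_left_cancel' (n + i)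
          (((Nat.modEq_zero_iff_dvd).mpr hd).trans
            ((Nat.modEq_zero_iff_dvd).mpr hdvd).symm)
        exact hne (by
          have := e3
          unfold Nat.ModEq at this
          rwa [Nat.mod_eq_of_lt (mem_range.mp hj), Nat.mod_eq_of_lt hj0lt] at this)
      · exact fun h => absurd (mem_range.mpr hj0lt) h
  rw [Finset.sum_congr rfl hinner, Finset.sum_ite, Finset.sum_const, Finset.sum_const,
    nsmul_eq_mul, nsmul_eq_mul]
  have hfilt1 : ((range N).filter (fun i => i ≤ N - n)).card = N - n + 1 := by
    have : (range N).filter (fun i => i ≤ N - n) = range (N - n + 1) := by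
      ext x; simp only [mem_filter, mem_range]; omega
    rw [this, card_range]
  have hfilt2 : ((range N).filter (fun i => ¬ i ≤ N - n)).card = n - 1 := by
    have : (range N).filter (fun i => ¬ i ≤ N - n) = Ico (N - n + 1) N := by
      ext x; simp only [mem_filter, mem_range, mem_Ico]; omega
    rw [this, Nat.card_Ico]; omega
  rw [hfilt1, hfilt2]
  by_cases h2 : 2 ≤ n
  · have hzz : z ^ ((n : ℤ) - 2) = z ^ (n - 2 : ℕ) := by
      rw [show (n : ℤ) - 2 = ((n - 2 : ℕ) : ℤ) by omega, zpow_natCast]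
    rw [hzz, show N + n - 2 = n - 2 + N by omega, pow_add,
      show 2 * N - n = N - n + N by omega, pow_add,
      Nat.cast_add, Nat.cast_sub hnN, Nat.cast_one, Nat.cast_sub hn1, Nat.cast_one]
    field_simp
    ring
  · obtain rfl : n = 1 := by omega
    rw [show N - 1 + 1 = N by omega, show N + 1 - 2 = N - 1 by omega]
    norm_num
    have hzN : z ^ N = z ^ (N - 1) * z := by
      rw [← pow_succ]; congr 1; omega
    have hq : z ^ N / z = z ^ (N - 1) := by
      rw [hzN, mul_div_cancel_right₀ _ hz]
    rw [show z⁻¹ * w ^ (N - 1) * ((N : ℂ) * z ^ N / (z ^ N - w ^ N) ^ 2)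
        = w ^ (N - 1) * ((N : ℂ) * (z ^ N / z) / (z ^ N - w ^ N) ^ 2) by ring, hq]
    field_simp
    ring
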